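/- Let m_0,…,m_{p−1} be positive integers with even sum m and each m_i < m/2, α = 1/p, m'_i = m_i + α, β = γ = 1. If R ⊆ {0,…,p−1} with |R| ≥ 2 satisfies ∑_{i∈R} m_i > m/2, then ∑_{i∈R} m_i ≥ m/2 + 1, and any gather tree over {indices in R} ∪ {p, p+1} (with m'_p = m/2, m'_{p+1} = m/2+1, complement R̄) rooted at p+1 with the two-subtree structure (R-tree into p+1, R̄-tree with block m'_p into p+1) has cost at least 3α + 2m + 2 > 2α + 2m + 2. -/

import Mathlib

open Finset

/-- A gather tree over processors `Fin n`, written in binary-join form: `node t s` means the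
root of `t` (which is also the root of the combined tree) receives, as its last communication,
the whole data segment gathered in the subtree `s` from the root of `s`. -/
inductive GTree (n : ℕ) : Type where
  | leaf : Fin n → GTree n
  | node : GTree n → GTree n → GTree n

namespace GTree

/-- The root processor of a gather tree. -/
def root {n : ℕ} : GTree n → Fin n
  | leaf i => i
  | node t _ => t.root

/-- The set of processors spanned by a gather tree. -/
def members {n : ℕ} : GTree n → Finset (Fin n)
  | leaf i => {i}
  | node t s => t.members ∪ s.members

/-- A gather tree is valid if each processor occurs at most once in it. -/
def valid {n : ℕ} : GTree n → Prop
  | leaf _ => True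
  | node t s => t.valid ∧ s.valid ∧ Disjoint t.members s.members

/-- Total size of the data blocks gathered in a tree. -/
def size {n : ℕ} (m : Fin n → ℝ) : GTree n → ℝ
  | leaf i => m i
  | node t s => t.size m + s.size m

/-- Completion time (cost) of a gather tree under the one-ported linear cost model:
a singleton subtree accounts for the local copy `γ * m i` of its processor's own block,
and a join costs the maximum of the two subtree completion times plus the transmission
time `α + β * Size(sent subtree)`. -/
def cost {n : ℕ} (α β γ : ℝ) (m : Fin n → ℝ) : GTree n → ℝ
  | leaf i => γ * m i
  | node t s => max (t.cost α β γ m) (s.cost α β γ m) + α + β * s.size m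

/-- Number of children of the root of the tree. -/
def rootDeg {n : ℕ} : GTree n → ℕ
  | leaf _ => 0
  | node t _ => t.rootDeg + 1

end GTree

namespace GTreeAux

lemma size_le_cost {n : ℕ} (α : ℝ) (hα : 0 ≤ α) (m : Fin n → ℝ) :
    ∀ T : GTree n, T.size m ≤ T.cost α 1 1 m := by
  intro T
  induction T with
  | leaf i => simp [GTree.size, GTree.cost]
  | node t s iht ihs =>
    simp only [GTree.size, GTree.cost, one_mul]
    have := le_max_left (t.cost α 1 1 m) (s.cost α 1 1 m)
    linarith

lemma size_eq_sum {n : ℕ} (m : Fin n → ℝ) :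
    ∀ T : GTree n, T.valid → T.size m = ∑ i ∈ T.members, m i := by
  intro T
  induction T with
  | leaf i => intro _; simp [GTree.size, GTree.members]
  | node t s iht ihs =>
    rintro ⟨ht, hs, hd⟩
    simp [GTree.size, GTree.members, iht ht, ihs hs, Finset.sum_union hd]

end GTreeAux


/-- The 'only if' direction, unbalanced case, of the NP-hardness reduction: if
`R ⊆ {0,…,p-1}` with `|R| ≥ 2` satisfies `∑_{i ∈ R} m i > M/2`, then
`∑_{i ∈ R} m i ≥ M/2 + 1`, and any gather tree of the two-subtree structure rooted at
processor `p + 1` (an `R`-subtree sent into `p + 1`, then an `R̄ ∪ {p}`-subtree sent into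
`p + 1`) has cost at least `3α + 2M + 2`, which exceeds `2α + 2M + 2`. -/
theorem stmt_9 (p : ℕ) (hp : 1 ≤ p) (m : Fin p → ℕ) (hpos : ∀ i, 0 < m i)
    (M : ℕ) (hM : M = ∑ i, m i) (heven : 2 ∣ M) (hsmall : ∀ i, m i < M / 2)
    (α : ℝ) (hα : α = 1 / (p : ℝ))
    (m' : Fin (p + 2) → ℝ)
    (hm' : ∀ i : Fin p, m' (Fin.castAdd 2 i) = (m i : ℝ) + α)
    (hmp : m' ⟨p, by omega⟩ = (M : ℝ) / 2)
    (hmp1 : m' ⟨p + 1, by omega⟩ = (M : ℝ) / 2 + 1)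
    (R : Finset (Fin p)) (hcard : 2 ≤ R.card) (hsum : M / 2 < ∑ i ∈ R, m i) :
    M / 2 + 1 ≤ ∑ i ∈ R, m i ∧
    (∀ T₁ T₂ : GTree (p + 2),
      T₁.members = R.image (Fin.castAdd 2) →
      T₂.members = insert ⟨p, by omega⟩ (Rᶜ.image (Fin.castAdd 2)) →
      (GTree.node (GTree.node (GTree.leaf ⟨p + 1, by omega⟩) T₁) T₂).valid →
      3 * α + 2 * (M : ℝ) + 2 ≤
        (GTree.node (GTree.node (GTree.leaf ⟨p + 1, by omega⟩) T₁) T₂).cost α 1 1 m') ∧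
    2 * α + 2 * (M : ℝ) + 2 < 3 * α + 2 * (M : ℝ) + 2 := by
  have hp0 : (0:ℝ) < p := by exact_mod_cast hp
  have hα0 : 0 < α := by rw [hα]; positivity
  obtain ⟨K, hK⟩ := heven
  have hKd : M / 2 = K := by omega
  refine ⟨by omega, ?_, by linarith⟩
  intro T₁ T₂ h1 h2 hv
  obtain ⟨⟨-, hv1, hd1⟩, hv2, hd⟩ := hv
  have hinj : Function.Injective (Fin.castAdd 2 : Fin p → Fin (p + 2)) := by
    intro a b h
    have := congrArg Fin.val h
    simpa [Fin.ext_iff] using this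
  -- sizes
  have hS1 : T₁.size m' = (∑ i ∈ R, (m i : ℝ)) + R.card * α := by
    rw [GTreeAux.size_eq_sum m' T₁ hv1, h1,
      Finset.sum_image (fun a _ b _ h => hinj h)]
    simp [hm', Finset.sum_add_distrib, mul_comm]
  have hpne : (⟨p, by omega⟩ : Fin (p + 2)) ∉ Rᶜ.image (Fin.castAdd 2) := by
    simp only [Finset.mem_image, not_exists]
    rintro a ⟨-, h⟩
    have := congrArg Fin.val h
    simp at this
    omega
  have hS2 : T₂.size m' = (M : ℝ) / 2 + ((∑ i ∈ Rᶜ, (m i : ℝ)) + Rᶜ.card * α) := by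
    rw [GTreeAux.size_eq_sum m' T₂ hv2, h2, Finset.sum_insert hpne, hmp,
      Finset.sum_image (fun a _ b _ h => hinj h)]
    simp [hm', Finset.sum_add_distrib, mul_comm]
  -- arithmetic facts
  have hsplit : (∑ i ∈ R, (m i : ℝ)) + (∑ i ∈ Rᶜ, (m i : ℝ)) = (M : ℝ) := by
    rw [Finset.sum_add_sum_compl, hM, Nat.cast_sum]
  have hcards : (R.card : ℝ) * α + (Rᶜ.card : ℝ) * α = 1 := by
    have : R.card + Rᶜ.card = p := by
      simpa using Finset.card_add_card_compl R
    rw [← add_mul, hα]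
    have hp' : ((R.card : ℝ) + (Rᶜ.card : ℝ)) = (p : ℝ) := by exact_mod_cast this
    rw [hp', mul_one_div, div_self hp0.ne']
  have hSge : (K : ℝ) + 1 ≤ ∑ i ∈ R, (m i : ℝ) := by
    have : K + 1 ≤ ∑ i ∈ R, m i := by omega
    exact_mod_cast this
  have hMK : (M : ℝ) = 2 * K := by exact_mod_cast hK
  have hRcard : (2 : ℝ) ≤ R.card := by exact_mod_cast hcard
  have hRc0 : (0 : ℝ) ≤ (Rᶜ.card : ℝ) * α := mul_nonneg (Nat.cast_nonneg _) hα0.le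
  -- cost bounds
  have hT1node : α + T₁.size m' ≤ T₁.cost α 1 1 m' := by
    cases T₁ with
    | leaf i =>
      exfalso
      have : ({i} : Finset (Fin (p + 2))).card = R.card := by
        rw [show ({i} : Finset (Fin (p+2))) = GTree.members (GTree.leaf i) from rfl, h1,
          Finset.card_image_of_injective _ hinj]
      simp at this
      omega
    | node t s =>
      have ht := GTreeAux.size_le_cost α hα0.le m' t
      have := le_max_left (t.cost α 1 1 m') (s.cost α 1 1 m')
      simp only [GTree.cost, GTree.size, one_mul]
      linarith
  have hT2 := GTreeAux.size_le_cost α hα0.le m' T₂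
  simp only [GTree.cost, one_mul]
  set S1 := T₁.size m'
  set S2 := T₂.size m'
  set C1 := T₁.cost α 1 1 m'
  set C2 := T₂.cost α 1 1 m'
  have hmax1 : C1 ≤ max (m' ⟨p + 1, by omega⟩) C1 := le_max_right _ _
  have hmax2 : max (m' ⟨p + 1, by omega⟩) C1 + α + S1 ≤
      max (max (m' ⟨p + 1, by omega⟩) C1 + α + S1) C2 := le_max_left _ _
  have hR0 : (0:ℝ) ≤ (R.card : ℝ) * α := mul_nonneg (Nat.cast_nonneg _) hα0.le
  linarith [hT1node, hT2, hmax1, hmax2, hS1, hS2, hsplit, hcards, hSge, hMK, hR0, hRc0]
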